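/- Let β, β̂ : Fin n → ℝ, define v_{ii} = Σ_{j≠i} f(β_i+β_j) and v̂_{ii} = Σ_{j≠i} f(β̂_i+β̂_j) where f(x) = e^x/(1+e^x)^2. If max_i |β̂_i - β_i| ≤ ε, then |v̂_{ii} - v_{ii}| ≤ 2(n-1)ε/(6√3) for every i. -/

import Mathlib

open Real Finset

private lemma f_hasDerivAt (x : ℝ) :
    HasDerivAt (fun x : ℝ => exp x / (1 + exp x) ^ 2)
      (exp x * (1 - exp x) / (1 + exp x) ^ 3) x := by
  have h1 : (1 + exp x) ≠ 0 := by positivity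
  have hden : HasDerivAt (fun x : ℝ => (1 + exp x) ^ 2)
      (2 * (1 + exp x) ^ 1 * exp x) x := by
    exact ((Real.hasDerivAt_exp x).const_add 1).pow 2
  have := (Real.hasDerivAt_exp x).div hden (by positivity)
  refine this.congr_deriv ?_
  rw [div_eq_div_iff (by positivity) (by positivity)]
  ring

private lemma deriv_bound (x : ℝ) :
    |exp x * (1 - exp x) / (1 + exp x) ^ 3| ≤ 1 / (6 * Real.sqrt 3) := by
  set t := exp x with ht
  have htpos : 0 < t := exp_pos x
  have hs : (0:ℝ) < Real.sqrt 3 := by positivity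
  have hs2 : Real.sqrt 3 ^ 2 = 3 := Real.sq_sqrt (by norm_num)
  have hden : (0:ℝ) < (1 + t) ^ 3 := by positivity
  rw [abs_div, abs_of_pos hden, div_le_div_iff₀ hden (by positivity)]
  have key : |t * (1 - t)| * (6 * Real.sqrt 3) ≤ (1 + t) ^ 3 := by
    rcases le_total t 1 with h | h
    · rw [abs_of_nonneg (by nlinarith)]
      nlinarith [sq_nonneg (t - (2 - Real.sqrt 3)), sq_nonneg t, mul_pos htpos hs,
        sq_nonneg (t - (2 - Real.sqrt 3)) , mul_nonneg (sq_nonneg (t - (2 - Real.sqrt 3))) (le_of_lt htpos)]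
    · rw [abs_of_nonpos (by nlinarith)]
      have h74 : 0 ≤ 7 - 4 * Real.sqrt 3 := by nlinarith
      nlinarith [mul_nonneg (sq_nonneg (t - (2 + Real.sqrt 3))) (by linarith : (0:ℝ) ≤ t + 7 - 4 * Real.sqrt 3)]
  linarith

private lemma f_lip (a b : ℝ) :
    |exp a / (1 + exp a) ^ 2 - exp b / (1 + exp b) ^ 2| ≤ |a - b| / (6 * Real.sqrt 3) := by
  have := Convex.norm_image_sub_le_of_norm_hasDerivWithin_le
    (f := fun x : ℝ => exp x / (1 + exp x) ^ 2)
    (f' := fun x : ℝ => exp x * (1 - exp x) / (1 + exp x) ^ 3)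
    (C := 1 / (6 * Real.sqrt 3)) (s := Set.univ)
    (fun x _ => (f_hasDerivAt x).hasDerivWithinAt)
    (fun x _ => by rw [Real.norm_eq_abs]; exact deriv_bound x)
    convex_univ (Set.mem_univ b) (Set.mem_univ a)
  rw [Real.norm_eq_abs, Real.norm_eq_abs] at this
  calc |exp a / (1 + exp a) ^ 2 - exp b / (1 + exp b) ^ 2|
      ≤ 1 / (6 * Real.sqrt 3) * |a - b| := this
    _ = |a - b| / (6 * Real.sqrt 3) := by ring

theorem fisher_diag_estimate_error (n : ℕ) (hn : 2 ≤ n) (ε : ℝ)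
    (β βhat : Fin n → ℝ) (hβ : ∀ i, |βhat i - β i| ≤ ε) (i : Fin n) :
    |∑ j ∈ Finset.univ.erase i, exp (βhat i + βhat j) / (1 + exp (βhat i + βhat j)) ^ 2
        - ∑ j ∈ Finset.univ.erase i, exp (β i + β j) / (1 + exp (β i + β j)) ^ 2|
      ≤ 2 * (n - 1 : ℝ) * ε / (6 * Real.sqrt 3) := by
  have hs : (0:ℝ) < 6 * Real.sqrt 3 := by positivity
  have hεnn : 0 ≤ ε := le_trans (abs_nonneg _) (hβ i)
  rw [← Finset.sum_sub_distrib]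
  calc |∑ j ∈ Finset.univ.erase i,
        (exp (βhat i + βhat j) / (1 + exp (βhat i + βhat j)) ^ 2
          - exp (β i + β j) / (1 + exp (β i + β j)) ^ 2)|
      ≤ ∑ j ∈ Finset.univ.erase i,
        |exp (βhat i + βhat j) / (1 + exp (βhat i + βhat j)) ^ 2
          - exp (β i + β j) / (1 + exp (β i + β j)) ^ 2| := Finset.abs_sum_le_sum_abs _ _
    _ ≤ ∑ j ∈ Finset.univ.erase i, 2 * ε / (6 * Real.sqrt 3) := by
        refine Finset.sum_le_sum fun j _ => ?_
        refine le_trans (f_lip _ _) ?_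
        gcongr
        calc |(βhat i + βhat j) - (β i + β j)|
            = |(βhat i - β i) + (βhat j - β j)| := by ring_nf
          _ ≤ |βhat i - β i| + |βhat j - β j| := abs_add_le _ _
          _ ≤ ε + ε := add_le_add (hβ i) (hβ j)
          _ = 2 * ε := by ring
    _ = (n - 1 : ℝ) * (2 * ε / (6 * Real.sqrt 3)) := by
        rw [Finset.sum_const, Finset.card_erase_of_mem (Finset.mem_univ i), Finset.card_univ,
          Fintype.card_fin, nsmul_eq_mul]
        congr 1
        have : (1:ℕ) ≤ n := by omega
        push_cast [this]
        ring
    _ = 2 * (n - 1 : ℝ) * ε / (6 * Real.sqrt 3) := by ring
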